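/- Let G be a graph on n ≥ 3 vertices and let X be a set of 3 vertices of G. Then the number of induced copies of C5 in G whose vertex set contains X is at most ((n−3)/2)^2. -/

import Mathlib

/-- The 5-cycle on `Fin 5`. -/
def C5 : SimpleGraph (Fin 5) := SimpleGraph.fromRel (fun i j => j = i + 1)

/-- The number of induced copies of `C5` in `G` whose vertex set contains `X`. -/
noncomputable def c5ThroughSet {n : ℕ} (G : SimpleGraph (Fin n)) (X : Finset (Fin n)) : ℕ :=
  Nat.card {s : Finset (Fin n) // s.card = 5 ∧ X ⊆ s ∧
    Nonempty (G.induce (s : Set (Fin n)) ≃g C5)}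

instance : DecidableRel C5.Adj := fun a b =>
  decidable_of_iff (a ≠ b ∧ (b = a + 1 ∨ a = b + 1)) Iff.rfl

/-- Adjacency signature of a vertex `a` against three reference vertices in `C5`. -/
def sigC (a p q r : Fin 5) : Bool × Bool × Bool :=
  (decide (C5.Adj a p), decide (C5.Adj a q), decide (C5.Adj a r))

/-- Given the adjacency pattern within a triple of vertices, `phiSig` returns the pair of
adjacency signatures (to that triple) that the remaining two vertices of an induced `C5`
must have. -/
def phiSig (e12 e13 e23 : Bool) : (Bool × Bool × Bool) × (Bool × Bool × Bool) :=
  match e12, e13, e23 with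
  | true, true, false => ((false,true,false),(false,false,true))
  | true, false, true => ((true,false,false),(false,false,true))
  | false, true, true => ((true,false,false),(false,true,false))
  | true, false, false => ((true,false,true),(false,true,true))
  | false, true, false => ((true,true,false),(false,true,true))
  | false, false, true => ((true,true,false),(true,false,true))
  | _, _, _ => ((true,true,true),(false,false,false))

lemma phiSig_ne : ∀ a b c : Bool, (phiSig a b c).1 ≠ (phiSig a b c).2 := by decide

lemma c5key : ∀ p q r a b : Fin 5, p ≠ q → p ≠ r → q ≠ r → a ≠ p → a ≠ q → a ≠ r →
    b ≠ p → b ≠ q → b ≠ r → a ≠ b →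
    (sigC a p q r = (phiSig (decide (C5.Adj p q)) (decide (C5.Adj p r)) (decide (C5.Adj q r))).1 ∧
     sigC b p q r = (phiSig (decide (C5.Adj p q)) (decide (C5.Adj p r)) (decide (C5.Adj q r))).2) ∨
    (sigC b p q r = (phiSig (decide (C5.Adj p q)) (decide (C5.Adj p r)) (decide (C5.Adj q r))).1 ∧
     sigC a p q r = (phiSig (decide (C5.Adj p q)) (decide (C5.Adj p r)) (decide (C5.Adj q r))).2) := by
  decide

/-- Structure of an induced `C5` through a fixed triple of vertices: the two extra vertices
have the adjacency signatures prescribed by `phiSig`, in some order. -/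
lemma c5_structure {n : ℕ} (G : SimpleGraph (Fin n)) [DecidableRel G.Adj]
    (x₁ x₂ x₃ : Fin n) (h12 : x₁ ≠ x₂) (h13 : x₁ ≠ x₃) (h23 : x₂ ≠ x₃)
    (s : Finset (Fin n)) (hcard : s.card = 5) (hsub : ({x₁, x₂, x₃} : Finset (Fin n)) ⊆ s)
    (e : G.induce (s : Set (Fin n)) ≃g C5) :
    ∃ u v : Fin n, u ∉ ({x₁, x₂, x₃} : Finset (Fin n)) ∧ v ∉ ({x₁, x₂, x₃} : Finset (Fin n)) ∧
      (decide (G.Adj u x₁), decide (G.Adj u x₂), decide (G.Adj u x₃)) =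
        (phiSig (decide (G.Adj x₁ x₂)) (decide (G.Adj x₁ x₃)) (decide (G.Adj x₂ x₃))).1 ∧
      (decide (G.Adj v x₁), decide (G.Adj v x₂), decide (G.Adj v x₃)) =
        (phiSig (decide (G.Adj x₁ x₂)) (decide (G.Adj x₁ x₃)) (decide (G.Adj x₂ x₃))).2 ∧
      s = insert u (insert v ({x₁, x₂, x₃} : Finset (Fin n))) := by
  set X : Finset (Fin n) := {x₁, x₂, x₃} with hXdef
  have hXcard : X.card = 3 := by
    rw [hXdef]
    rw [Finset.card_insert_of_notMem (by simp [h12, h13]),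
      Finset.card_insert_of_notMem (by simp [h23]), Finset.card_singleton]
  have hsd : (s \ X).card = 2 := by
    rw [Finset.card_sdiff_of_subset hsub, hcard, hXcard]
  obtain ⟨u, v, huv, hsdeq⟩ := Finset.card_eq_two.mp hsd
  have hu : u ∈ s \ X := by rw [hsdeq]; simp
  have hv : v ∈ s \ X := by rw [hsdeq]; simp
  have hus : u ∈ s := (Finset.mem_sdiff.mp hu).1
  have hvs : v ∈ s := (Finset.mem_sdiff.mp hv).1
  have hunX : u ∉ X := (Finset.mem_sdiff.mp hu).2
  have hvnX : v ∉ X := (Finset.mem_sdiff.mp hv).2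
  have hx1s : x₁ ∈ s := hsub (by simp [hXdef])
  have hx2s : x₂ ∈ s := hsub (by simp [hXdef])
  have hx3s : x₃ ∈ s := hsub (by simp [hXdef])
  have hux1 : u ≠ x₁ := by rintro rfl; exact hunX (by simp [hXdef])
  have hux2 : u ≠ x₂ := by rintro rfl; exact hunX (by simp [hXdef])
  have hux3 : u ≠ x₃ := by rintro rfl; exact hunX (by simp [hXdef])
  have hvx1 : v ≠ x₁ := by rintro rfl; exact hvnX (by simp [hXdef])
  have hvx2 : v ≠ x₂ := by rintro rfl; exact hvnX (by simp [hXdef])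
  have hvx3 : v ≠ x₃ := by rintro rfl; exact hvnX (by simp [hXdef])
  -- the image vertices in `C5`
  let m : ∀ w : Fin n, w ∈ s → Fin 5 := fun w hw => e ⟨w, by exact_mod_cast hw⟩
  have hmne : ∀ w w' (hw : w ∈ s) (hw' : w' ∈ s), w ≠ w' → m w hw ≠ m w' hw' := by
    intro w w' hw hw' hne h
    exact hne (congrArg Subtype.val (e.injective h))
  have hadj : ∀ w w' (hw : w ∈ s) (hw' : w' ∈ s),
      (G.Adj w w' ↔ C5.Adj (m w hw) (m w' hw')) := by
    intro w w' hw hw'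
    rw [e.map_adj_iff]
    exact Iff.rfl
  have key := c5key (m x₁ hx1s) (m x₂ hx2s) (m x₃ hx3s) (m u hus) (m v hvs)
    (hmne x₁ x₂ hx1s hx2s h12) (hmne x₁ x₃ hx1s hx3s h13) (hmne x₂ x₃ hx2s hx3s h23)
    (hmne u x₁ hus hx1s hux1) (hmne u x₂ hus hx2s hux2) (hmne u x₃ hus hx3s hux3)
    (hmne v x₁ hvs hx1s hvx1) (hmne v x₂ hvs hx2s hvx2) (hmne v x₃ hvs hx3s hvx3)
    (hmne u v hus hvs huv)
  have hd12 : decide (G.Adj x₁ x₂) = decide (C5.Adj (m x₁ hx1s) (m x₂ hx2s)) :=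
    decide_eq_decide.mpr (hadj x₁ x₂ hx1s hx2s)
  have hd13 : decide (G.Adj x₁ x₃) = decide (C5.Adj (m x₁ hx1s) (m x₃ hx3s)) :=
    decide_eq_decide.mpr (hadj x₁ x₃ hx1s hx3s)
  have hd23 : decide (G.Adj x₂ x₃) = decide (C5.Adj (m x₂ hx2s) (m x₃ hx3s)) :=
    decide_eq_decide.mpr (hadj x₂ x₃ hx2s hx3s)
  have hsig : ∀ w (hw : w ∈ s),
      (decide (G.Adj w x₁), decide (G.Adj w x₂), decide (G.Adj w x₃)) =
        sigC (m w hw) (m x₁ hx1s) (m x₂ hx2s) (m x₃ hx3s) := by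
    intro w hw
    simp only [sigC]
    rw [decide_eq_decide.mpr (hadj w x₁ hw hx1s), decide_eq_decide.mpr (hadj w x₂ hw hx2s),
      decide_eq_decide.mpr (hadj w x₃ hw hx3s)]
  have hseq : s = insert u (insert v X) := by
    have hss : insert u (insert v X) ⊆ s := by
      intro w hw
      simp only [Finset.mem_insert] at hw
      rcases hw with rfl | rfl | hw
      · exact hus
      · exact hvs
      · exact hsub hw
    refine (Finset.eq_of_subset_of_card_le hss ?_).symm
    rw [hcard, Finset.card_insert_of_notMem (by simp [Finset.mem_insert, huv, hunX]),
      Finset.card_insert_of_notMem hvnX, hXcard]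
  rw [hd12, hd13, hd23]
  rcases key with ⟨h1, h2⟩ | ⟨h1, h2⟩
  · exact ⟨u, v, hunX, hvnX, by rw [hsig u hus]; exact h1, by rw [hsig v hvs]; exact h2, hseq⟩
  · refine ⟨v, u, hvnX, hunX, by rw [hsig v hvs]; exact h1, by rw [hsig u hus]; exact h2, ?_⟩
    rw [hseq, Finset.insert_comm]

/-- If `X` is a set of 3 vertices of a graph `G` on `n ≥ 3` vertices, then the number of
induced copies of `C5` containing `X` is at most `((n−3)/2)²`. -/
theorem c5_through_triple_bound (n : ℕ) (hn : 3 ≤ n) (G : SimpleGraph (Fin n))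
    (X : Finset (Fin n)) (hX : X.card = 3) :
    (c5ThroughSet G X : ℝ) ≤ (((n : ℝ) - 3) / 2) ^ 2 := by
  classical
  obtain ⟨x₁, x₂, x₃, h12, h13, h23, rfl⟩ := Finset.card_eq_three.mp hX
  set X : Finset (Fin n) := {x₁, x₂, x₃} with hXdef
  set σ := phiSig (decide (G.Adj x₁ x₂)) (decide (G.Adj x₁ x₃)) (decide (G.Adj x₂ x₃)) with hσ
  set sg : Fin n → Bool × Bool × Bool :=
    fun w => (decide (G.Adj w x₁), decide (G.Adj w x₂), decide (G.Adj w x₃)) with hsg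
  set S₁ : Finset (Fin n) := Finset.univ.filter (fun w => w ∉ X ∧ sg w = σ.1) with hS₁
  set S₂ : Finset (Fin n) := Finset.univ.filter (fun w => w ∉ X ∧ sg w = σ.2) with hS₂
  -- the injection
  have main : ∀ s : Finset (Fin n),
      (s.card = 5 ∧ X ⊆ s ∧ Nonempty (G.induce (s : Set (Fin n)) ≃g C5)) →
      ∃ p : Fin n × Fin n, p.1 ∈ S₁ ∧ p.2 ∈ S₂ ∧ s = insert p.1 (insert p.2 X) := by
    rintro s ⟨hcard, hsub, ⟨e⟩⟩
    obtain ⟨u, v, hu, hv, h1, h2, hseq⟩ :=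
      c5_structure G x₁ x₂ x₃ h12 h13 h23 s hcard hsub e
    exact ⟨(u, v), by simp [hS₁, hu, hsg, h1, hXdef, hσ]; simpa using hu, by simp [hS₂, hv, hsg, h2, hXdef, hσ]; simpa using hv, hseq⟩
  have hcardle : c5ThroughSet G X ≤ S₁.card * S₂.card := by
    rw [c5ThroughSet]
    have := Nat.card_le_card_of_injective
      (α := {s : Finset (Fin n) // s.card = 5 ∧ X ⊆ s ∧
        Nonempty (G.induce (s : Set (Fin n)) ≃g C5)})
      (β := S₁ × S₂)
      (fun t => (⟨(Classical.choose (main t.1 t.2)).1, (Classical.choose_spec (main t.1 t.2)).1⟩,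
                 ⟨(Classical.choose (main t.1 t.2)).2, (Classical.choose_spec (main t.1 t.2)).2.1⟩))
      ?_
    · simpa [Nat.card_prod, Nat.card_eq_finsetCard] using this
    · intro t t' h
      have h1 : (Classical.choose (main t.1 t.2)).1 = (Classical.choose (main t'.1 t'.2)).1 := by
        have := congrArg Prod.fst h
        exact congrArg Subtype.val this
      have h2 : (Classical.choose (main t.1 t.2)).2 = (Classical.choose (main t'.1 t'.2)).2 := by
        have := congrArg Prod.snd h
        exact congrArg Subtype.val this
      have e1 := (Classical.choose_spec (main t.1 t.2)).2.2
      have e2 := (Classical.choose_spec (main t'.1 t'.2)).2.2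
      apply Subtype.ext
      rw [e1, e2, h1, h2]
  -- size bound on S₁, S₂
  have hdisj : Disjoint S₁ S₂ := by
    rw [Finset.disjoint_left]
    intro w hw1 hw2
    simp only [hS₁, hS₂, Finset.mem_filter] at hw1 hw2
    exact phiSig_ne _ _ _ (hw1.2.2 ▸ hw2.2.2)
  have hsum : S₁.card + S₂.card ≤ n - 3 := by
    have hsubc : S₁ ∪ S₂ ⊆ Xᶜ := by
      intro w hw
      rcases Finset.mem_union.mp hw with hw | hw <;>
        simp only [hS₁, hS₂, Finset.mem_filter] at hw <;>
        simpa using hw.2.1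
    have := Finset.card_le_card hsubc
    rw [Finset.card_union_of_disjoint hdisj] at this
    rwa [Finset.card_compl, hX, Fintype.card_fin] at this
  -- wrap up with real arithmetic
  have hc : (c5ThroughSet G X : ℝ) ≤ (S₁.card : ℝ) * S₂.card := by exact_mod_cast hcardle
  have hs : (S₁.card : ℝ) + S₂.card ≤ (n : ℝ) - 3 := by
    have : ((S₁.card + S₂.card : ℕ) : ℝ) ≤ ((n - 3 : ℕ) : ℝ) := by exact_mod_cast hsum
    rwa [Nat.cast_add, Nat.cast_sub hn] at this
  have ha : (0:ℝ) ≤ S₁.card := Nat.cast_nonneg _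
  have hb : (0:ℝ) ≤ S₂.card := Nat.cast_nonneg _
  nlinarith [sq_nonneg ((S₁.card : ℝ) - S₂.card), sq_nonneg ((S₁.card : ℝ) + S₂.card)]
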